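/- Let X be a topological space, A ⊆ X, F ⊆ X a functionally closed set and G ⊆ X a functionally open set such that A ⊆ F ⊆ G and A is a retract of G (there exists a continuous mapping r : G → A with r(a) = a for all a ∈ A). Then there exists a linear continuous mapping φ : C_p*(A) → C_p*(X) such that φ(y)|_A = y for every y ∈ C_p*(A). -/

import Mathlib

open Set Topology

/-- `C_p(X)`: the continuous real-valued functions on `X`, topologized by pointwise
convergence (i.e. as a subspace of `X → ℝ` with the product topology). -/
abbrev Cp (X : Type*) [TopologicalSpace X] : Type _ := {f : X → ℝ // Continuous f}

/-- `C_p*(X)`: the bounded continuous real-valued functions on `X`, topologized by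
pointwise convergence. -/
abbrev CpStar (X : Type*) [TopologicalSpace X] : Type _ :=
  {f : X → ℝ // Continuous f ∧ ∃ M : ℝ, ∀ x, |f x| ≤ M}

/-- A set is functionally open (a cozero set) if it is the cozero set of a
continuous real-valued function. -/
def FunctionallyOpen {X : Type*} [TopologicalSpace X] (U : Set X) : Prop :=
  ∃ f : X → ℝ, Continuous f ∧ U = f ⁻¹' ({0}ᶜ)

/-- A subset `A` is strongly functionally discrete in `X` if there is a family of
functionally open sets `G a ∋ a` (for `a ∈ A`) which is discrete in `X`: every point
of `X` has a neighborhood meeting `G a` for at most one `a ∈ A`. -/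
def StronglyFunctionallyDiscrete {X : Type*} [TopologicalSpace X] (A : Set X) : Prop :=
  ∃ G : A → Set X,
    (∀ a : A, (a : X) ∈ G a) ∧
    (∀ a : A, FunctionallyOpen (G a)) ∧
    (∀ x : X, ∃ V ∈ 𝓝 x, {a : A | (V ∩ G a).Nonempty}.Subsingleton)

/-- If `A ⊆ F ⊆ G` with `F` functionally closed, `G` functionally open and `A` a retract
of `G`, then there is a linear continuous extender `φ : C_p*(A) → C_p*(X)`. -/
theorem stmt_13 {X : Type*} [TopologicalSpace X] (A F G : Set X)
    (hAF : A ⊆ F) (hFG : F ⊆ G)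
    (hF : FunctionallyOpen Fᶜ) (hG : FunctionallyOpen G)
    (r : G → A) (hr : Continuous r)
    (hretr : ∀ (x : X) (hx : x ∈ A), ((r ⟨x, hFG (hAF hx)⟩ : A) : X) = x) :
    ∃ φ : CpStar A → CpStar X, Continuous φ ∧
      (∀ (c d : ℝ) (y z w : CpStar A), (∀ a : A, w.1 a = c * y.1 a + d * z.1 a) →
        ∀ x : X, (φ w).1 x = c * (φ y).1 x + d * (φ z).1 x) ∧
      (∀ y : CpStar A, ∀ a : A, (φ y).1 a = y.1 a) := by
  classical
  obtain ⟨u, hu, hFc⟩ := hF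
  obtain ⟨v, hv, hGc⟩ := hG
  have hmemF : ∀ x : X, x ∈ F ↔ u x = 0 := by
    intro x
    have : x ∈ Fᶜ ↔ u x ≠ 0 := by rw [hFc]; rfl
    simp only [mem_compl_iff] at this
    tauto
  have hmemG : ∀ x : X, x ∈ G ↔ v x ≠ 0 := by
    intro x; rw [hGc]; rfl
  have hGopen : IsOpen G := by
    rw [hGc]; exact (isClosed_singleton.preimage hv).isOpen_compl
  have hden : ∀ x : X, 0 < |u x| + |v x| := by
    intro x
    rcases eq_or_ne (v x) 0 with hvx | hvx
    · have hxG : x ∉ G := by rw [hmemG]; simpa using hvx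
      have hxF : x ∉ F := fun hxF => hxG (hFG hxF)
      have hux : u x ≠ 0 := by rw [hmemF] at hxF; exact hxF
      have := abs_pos.2 hux
      nlinarith [abs_nonneg (v x)]
    · have := abs_pos.2 hvx
      nlinarith [abs_nonneg (u x)]
  set h : X → ℝ := fun x => |v x| / (|u x| + |v x|) with hh_def
  have hh_cont : Continuous h := hv.abs.div (hu.abs.add hv.abs) (fun x => (hden x).ne')
  have hh0 : ∀ x, 0 ≤ h x := fun x => div_nonneg (abs_nonneg _) (hden x).le
  have hh1 : ∀ x, h x ≤ 1 := by
    intro x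
    rw [hh_def]
    rw [div_le_one (hden x)]
    nlinarith [abs_nonneg (u x)]
  have hhF : ∀ x ∈ F, h x = 1 := by
    intro x hx
    have hux : u x = 0 := (hmemF x).1 hx
    have hvx : v x ≠ 0 := (hmemG x).1 (hFG hx)
    simp [hh_def, hux, abs_ne_zero.2 hvx]
  have hhG : ∀ x, x ∉ G → h x = 0 := by
    intro x hx
    have hvx : v x = 0 := by by_contra hvx; exact hx ((hmemG x).2 hvx)
    simp [hh_def, hvx]
  set e : CpStar A → X → ℝ :=
    fun y x => h x * (if hx : x ∈ G then y.1 (r ⟨x, hx⟩) else 0) with he_def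
  -- bound on e
  have hbnd : ∀ (y : CpStar A) (M : ℝ) (_ : 0 ≤ M), (∀ a, |y.1 a| ≤ M) →
      ∀ x, |e y x| ≤ M := by
    intro y M hM0 hM x
    have h1 : |(if hx : x ∈ G then y.1 (r ⟨x, hx⟩) else 0)| ≤ M := by
      by_cases hx : x ∈ G
      · rw [dif_pos hx]; exact hM _
      · rw [dif_neg hx]; simpa using hM0
    calc |e y x| = h x * |(if hx : x ∈ G then y.1 (r ⟨x, hx⟩) else 0)| := by
          rw [he_def, abs_mul, abs_of_nonneg (hh0 x)]
      _ ≤ 1 * M := mul_le_mul (hh1 x) h1 (abs_nonneg _) zero_le_one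
      _ = M := one_mul M
  -- continuity of e y
  have hcont : ∀ y : CpStar A, Continuous (e y) := by
    intro y
    obtain ⟨hyc, M0, hM0⟩ := y.2
    set M : ℝ := max M0 0 with hMdef
    have hM : ∀ a, |y.1 a| ≤ M := fun a => (hM0 a).trans (le_max_left _ _)
    have hMnn : 0 ≤ M := le_max_right _ _
    rw [continuous_iff_continuousAt]
    intro x
    by_cases hx : x ∈ G
    · -- on G, e y agrees with a continuous function locally
      have hco : ContinuousOn (e y) G := by
        rw [continuousOn_iff_continuous_restrict]
        have : G.domRestrict (e y) = fun p : G => h p * y.1 (r p) := by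
          funext p
          simp only [Set.domRestrict, he_def, dif_pos p.2]
        rw [this]
        exact ((hh_cont.comp continuous_subtype_val).mul (hyc.comp hr))
      exact hco.continuousAt (hGopen.mem_nhds hx)
    · -- outside G, squeeze to 0
      have hx0 : e y x = 0 := by rw [he_def]; simp [hhG x hx]
      unfold ContinuousAt
      rw [hx0]
      have hsq : ∀ z, ‖e y z‖ ≤ M * h z := by
        intro z
        have h1 : |(if hz : z ∈ G then y.1 (r ⟨z, hz⟩) else 0)| ≤ M := by
          by_cases hz : z ∈ G
          · rw [dif_pos hz]; exact hM _
          · rw [dif_neg hz]; simpa using hMnn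
        calc ‖e y z‖ = h z * |(if hz : z ∈ G then y.1 (r ⟨z, hz⟩) else 0)| := by
              rw [Real.norm_eq_abs, he_def, abs_mul, abs_of_nonneg (hh0 z)]
          _ ≤ h z * M := mul_le_mul_of_nonneg_left h1 (hh0 z)
          _ = M * h z := mul_comm _ _
      have hg0 : Filter.Tendsto (fun z => M * h z) (𝓝 x) (𝓝 0) := by
        have ht : Filter.Tendsto (fun z => M * h z) (𝓝 x) (𝓝 (M * h x)) :=
          (continuous_const.mul hh_cont).tendsto x
        have h0 : M * h x = 0 := by rw [hhG x hx]; ring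
        rwa [h0] at ht
      exact squeeze_zero_norm hsq hg0
  -- assemble φ
  refine ⟨fun y => ⟨e y, hcont y, ?_⟩, ?_, ?_, ?_⟩
  · obtain ⟨hyc, M0, hM0⟩ := y.2
    refine ⟨max M0 0, hbnd y _ (le_max_right _ _) (fun a => (hM0 a).trans (le_max_left _ _))⟩
  · -- continuity of φ
    apply Continuous.subtype_mk
    apply continuous_pi
    intro x
    by_cases hx : x ∈ G
    · have : (fun y : CpStar A => e y x) = fun y => h x * y.1 (r ⟨x, hx⟩) := by
        funext y; rw [he_def]; simp [dif_pos hx]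
      rw [this]
      exact continuous_const.mul ((continuous_apply _).comp continuous_subtype_val)
    · have : (fun y : CpStar A => e y x) = fun _ => 0 := by
        funext y; rw [he_def]; simp [dif_neg hx, hhG x hx]
      rw [this]
      exact continuous_const
  · -- linearity
    intro c d y z w hw x
    simp only [he_def]
    by_cases hx : x ∈ G
    · simp only [dif_pos hx, hw]
      ring
    · simp [dif_neg hx]
  · -- extension property
    intro y a
    have haF : (a : X) ∈ F := hAF a.2
    have haG : (a : X) ∈ G := hFG haF
    have hra : r ⟨(a : X), haG⟩ = a := Subtype.ext (hretr (a : X) a.2)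
    simp only [he_def, dif_pos haG, hhF _ haF, hra, one_mul]
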